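/- Standard-form reduction of the measurement and post-processing: Let M be a measurement on a finite-dimensional complex Hilbert space ℋ with finite outcome set Z, let Y, T be finite sets, and let ν be a post-processing map assigning to each t ∈ T a stochastic matrix ν_t(y | z). Define M̄_ν on the set Y^T of functions φ : T → Y by M̄_ν(φ) = Σ_z M(z)·Π_{t∈T} ν_t(φ(t) | z), and define π_t(y | φ) = δ_{y,φ(t)}. Then M̄_ν is a measurement with outcome set Y^T, and for every t ∈ T and y ∈ Y, Σ_{φ∈Y^T} π_t(y | φ)·M̄_ν(φ) = Σ_z ν_t(y | z)·M(z). Consequently, for every state ensemble 𝓔, score function f and partial information map α, one has E^post_{f,α}(𝓔; M, ν) = E^post_{f,α}(𝓔; M̄_ν, π). -/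

import Mathlib

open scoped BigOperators
open Matrix
open scoped ComplexOrder

noncomputable section

abbrev Mat (d : ℕ) := Matrix (Fin d) (Fin d) ℂ

def IsStateEnsemble {d : ℕ} {X : Type*} [Fintype X] (E : X → Mat d) : Prop :=
  (∀ x, (E x).PosSemidef) ∧ (∑ x, (E x).trace) = 1

def IsMeasurement {d : ℕ} {Z : Type*} [Fintype Z] (M : Z → Mat d) : Prop :=
  (∀ z, (M z).PosSemidef) ∧ (∑ z, M z) = 1

def IsScore {X Y : Type*} (f : X → Y → ℝ) : Prop :=
  ∀ x y, 0 ≤ f x y ∧ f x y ≤ 1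

def IsPartialInfo {T X : Type*} [Fintype T] (α : T → X → ℝ) : Prop :=
  (∀ t x, 0 ≤ α t x) ∧ ∀ x, (∑ t, α t x) = 1

def IsPostProc {T Y Z : Type*} [Fintype Y] (ν : T → Y → Z → ℝ) : Prop :=
  (∀ t y z, 0 ≤ ν t y z) ∧ ∀ t z, (∑ y, ν t y z) = 1

def Pg {d : ℕ} {X : Type*} [Fintype X] (E M : X → Mat d) : ℝ :=
  ∑ x, ((E x) * (M x)).trace.re

def PgMax {d : ℕ} {X : Type*} [Fintype X] (E : X → Mat d) : ℝ :=
  sSup {p : ℝ | ∃ M : X → Mat d, IsMeasurement M ∧ p = Pg E M}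

def Escore {d : ℕ} {X Y : Type*} [Fintype X] [Fintype Y]
    (f : X → Y → ℝ) (E : X → Mat d) (M : Y → Mat d) : ℝ :=
  ∑ x, ∑ y, f x y * ((E x) * (M y)).trace.re

def EMax {d : ℕ} {X Y : Type*} [Fintype X] [Fintype Y]
    (f : X → Y → ℝ) (E : X → Mat d) : ℝ :=
  sSup {p : ℝ | ∃ M : Y → Mat d, IsMeasurement M ∧ p = Escore f E M}

def Epost {d : ℕ} {X Y T Z : Type*} [Fintype X] [Fintype Y] [Fintype T] [Fintype Z]
    (f : X → Y → ℝ) (α : T → X → ℝ) (E : X → Mat d)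
    (M : Z → Mat d) (ν : T → Y → Z → ℝ) : ℝ :=
  ∑ x, ∑ y, ∑ t, ∑ z, f x y * α t x * ν t y z * ((E x) * (M z)).trace.re

def EpostMax {d : ℕ} {X Y T : Type*} [Fintype X] [Fintype Y] [Fintype T]
    (f : X → Y → ℝ) (α : T → X → ℝ) (E : X → Mat d) : ℝ :=
  sSup {p : ℝ | ∃ (n : ℕ) (M : Fin n → Mat d) (ν : T → Y → Fin n → ℝ),
    IsMeasurement M ∧ IsPostProc ν ∧ p = Epost f α E M ν}

def Eprior {d : ℕ} {X Y T : Type*} [Fintype X] [Fintype Y] [Fintype T]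
    (f : X → Y → ℝ) (α : T → X → ℝ) (E : X → Mat d) (N : T → Y → Mat d) : ℝ :=
  ∑ x, ∑ y, ∑ t, f x y * α t x * ((E x) * (N t y)).trace.re

def EpriorMax {d : ℕ} {X Y T : Type*} [Fintype X] [Fintype Y] [Fintype T]
    (f : X → Y → ℝ) (α : T → X → ℝ) (E : X → Mat d) : ℝ :=
  sSup {p : ℝ | ∃ N : T → Y → Mat d, (∀ t, IsMeasurement (N t)) ∧ p = Eprior f α E N}

def IsCompatible {d : ℕ} {T Y : Type*} [Fintype T] [Fintype Y] (N : T → Y → Mat d) : Prop :=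
  ∃ (n : ℕ) (M : Fin n → Mat d) (ν : T → Y → Fin n → ℝ),
    IsMeasurement M ∧ IsPostProc ν ∧ ∀ t y, N t y = ∑ z, ν t y z • M z

def stdPost {T Y : Type*} [DecidableEq Y] : T → Y → (T → Y) → ℝ :=
  fun t y φ => if y = φ t then 1 else 0

def Δconst {d : ℕ} {X Y : Type*} [Fintype X] [Fintype Y]
    (f : X → Y → ℝ) (E : X → Mat d) : ℝ :=
  ∑ x, ∑ y, f x y * (E x).trace.re

def auxEns {d : ℕ} {X Y : Type*} [Fintype X] [Fintype Y]
    (f : X → Y → ℝ) (E : X → Mat d) (y : Y) : Mat d :=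
  (Δconst f E)⁻¹ • ∑ x, f x y • E x

def auxEnsPost {d : ℕ} {X Y T : Type*} [Fintype X] [Fintype Y] [Fintype T]
    (f : X → Y → ℝ) (α : T → X → ℝ) (E : X → Mat d) (φ : T → Y) : Mat d :=
  ((Fintype.card Y : ℝ) ^ (Fintype.card T - 1) * Δconst f E)⁻¹ •
    ∑ x, ∑ t, (f x (φ t) * α t x) • E x

private lemma real_smul_mat {d : ℕ} (c : ℝ) (A : Mat d) : c • A = (c : ℂ) • A := by
  ext i j; simp [Complex.real_smul]

private lemma psd_smul_real {d : ℕ} {A : Mat d} (hA : A.PosSemidef) {c : ℝ} (hc : 0 ≤ c) :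
    (c • A).PosSemidef := by
  rw [real_smul_mat]
  refine ⟨?_, fun x => ?_⟩
  · simp [Matrix.IsHermitian, Matrix.conjTranspose_smul, hA.1.eq, Complex.conj_ofReal]
  · exact (hA.smul (a := (c : ℂ)) (by exact_mod_cast hc)).2 x

private lemma psd_sum {d : ℕ} {ι : Type*} (s : Finset ι) (f : ι → Mat d)
    (h : ∀ i ∈ s, (f i).PosSemidef) : (∑ i ∈ s, f i).PosSemidef := by
  classical
  induction s using Finset.induction_on with
  | empty => simpa using Matrix.PosSemidef.zero
  | insert a s' hx ih =>
    rw [Finset.sum_insert hx]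
    exact (h a (Finset.mem_insert_self a s')).add
      (ih fun i hi => h i (Finset.mem_insert_of_mem hi))

private lemma key1 {Y T Z : Type} [Fintype Y] [Fintype T] [DecidableEq T]
    (ν : T → Y → Z → ℝ) (hν : ∀ t z, ∑ y, ν t y z = 1) (z : Z) :
    ∑ φ : T → Y, ∏ t, ν t (φ t) z = 1 := by
  rw [← Fintype.prod_sum fun (t : T) (y : Y) => ν t y z]
  simp [hν]

private lemma key2 {Y T Z : Type} [Fintype Y] [Fintype T] [DecidableEq Y] [DecidableEq T]
    (ν : T → Y → Z → ℝ) (hν : ∀ t z, ∑ y, ν t y z = 1) (t : T) (y : Y) (z : Z) :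
    ∑ φ : T → Y, stdPost t y φ * ∏ t', ν t' (φ t') z = ν t y z := by
  have h : ∀ φ : T → Y, stdPost t y φ * ∏ t', ν t' (φ t') z
      = ∏ t', (if t' = t then (if φ t' = y then ν t y z else 0) else ν t' (φ t') z) := by
    intro φ
    unfold stdPost
    by_cases hy : y = φ t
    · rw [if_pos hy, one_mul]
      refine Finset.prod_congr rfl fun t' _ => ?_
      by_cases h' : t' = t
      · subst h'; rw [if_pos rfl, if_pos hy.symm, ← hy]
      · rw [if_neg h']
    · rw [if_neg hy, zero_mul]
      symm
      refine Finset.prod_eq_zero (Finset.mem_univ t) ?_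
      rw [if_pos rfl, if_neg (fun h => hy h.symm)]
  rw [Finset.sum_congr rfl (fun φ _ => h φ),
    ← Fintype.prod_sum fun (t' : T) (y' : Y) =>
      if t' = t then (if y' = y then ν t y z else 0) else ν t' y' z]
  have h2 : ∀ t' : T, (∑ y' : Y, if t' = t then (if y' = y then ν t y z else 0) else ν t' y' z)
      = if t' = t then ν t y z else 1 := by
    intro t'
    by_cases h' : t' = t <;> simp [h', hν]
  rw [Finset.prod_congr rfl (fun t' _ => h2 t')]
  simp

private lemma trace_re_sum_smul {d : ℕ} {ι : Type*} [Fintype ι]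
    (E : Mat d) (c : ι → ℝ) (A : ι → Mat d) :
    (E * ∑ i, c i • A i).trace.re = ∑ i, c i * (E * A i).trace.re := by
  rw [Matrix.mul_sum, Matrix.trace_sum, Complex.re_sum]
  refine Finset.sum_congr rfl fun i _ => ?_
  rw [real_smul_mat, Matrix.mul_smul, Matrix.trace_smul]
  simp [Complex.mul_re]

theorem stmt7 {d : ℕ} {X Y T Z : Type} [Fintype X] [Fintype Y] [Fintype T] [Fintype Z]
    [DecidableEq Y] [DecidableEq T]
    (M : Z → Mat d) (hM : IsMeasurement M)
    (ν : T → Y → Z → ℝ) (hν : IsPostProc ν) :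
    IsMeasurement (fun φ : T → Y => ∑ z, (∏ t, ν t (φ t) z) • M z) ∧
    (∀ (t : T) (y : Y),
      (∑ φ : T → Y, stdPost t y φ • ∑ z, (∏ t', ν t' (φ t') z) • M z)
        = ∑ z, ν t y z • M z) ∧
    (∀ (E : X → Mat d) (f : X → Y → ℝ) (α : T → X → ℝ),
      IsStateEnsemble E → IsScore f → IsPartialInfo α →
      Epost f α E M ν
        = Epost f α E (fun φ : T → Y => ∑ z, (∏ t, ν t (φ t) z) • M z) stdPost) := by
  refine ⟨⟨fun φ => ?_, ?_⟩, fun t y => ?_, fun E f α _ _ _ => ?_⟩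
  · refine psd_sum _ _ fun z _ => psd_smul_real (hM.1 z) ?_
    exact Finset.prod_nonneg fun t _ => hν.1 t (φ t) z
  · calc ∑ φ : T → Y, ∑ z, (∏ t, ν t (φ t) z) • M z
        = ∑ z, (∑ φ : T → Y, ∏ t, ν t (φ t) z) • M z := by
          rw [Finset.sum_comm]
          exact Finset.sum_congr rfl fun z _ => (Finset.sum_smul).symm
      _ = 1 := by
          rw [Finset.sum_congr rfl fun z _ => by rw [key1 ν hν.2 z, one_smul]]
          exact hM.2
  · simp only [Finset.smul_sum, smul_smul]
    rw [Finset.sum_comm]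
    refine Finset.sum_congr rfl fun z _ => ?_
    rw [← Finset.sum_smul, key2 ν hν.2 t y z]
  · unfold Epost
    refine Finset.sum_congr rfl fun x _ => Finset.sum_congr rfl fun y _ =>
      Finset.sum_congr rfl fun t _ => ?_
    have hz : ∀ φ : T → Y, ((E x) * ∑ z, (∏ t', ν t' (φ t') z) • M z).trace.re
        = ∑ z, (∏ t', ν t' (φ t') z) * ((E x) * M z).trace.re :=
      fun φ => trace_re_sum_smul (E x) _ M
    simp only [hz]
    simp only [Finset.mul_sum]
    rw [Finset.sum_comm]
    refine Finset.sum_congr rfl fun z _ => ?_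
    have h3 : ∀ φ : T → Y,
        f x y * α t x * stdPost t y φ * ((∏ t', ν t' (φ t') z) * ((E x) * M z).trace.re)
        = (stdPost t y φ * ∏ t', ν t' (φ t') z) * (f x y * α t x * ((E x) * M z).trace.re) := by
      intro φ; ring
    rw [Finset.sum_congr rfl fun φ _ => h3 φ, ← Finset.sum_mul, key2 ν hν.2 t y z]
    ring
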